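/- For all integers n ≥ 2 and i ≥ 1, the Fibonacci numbers satisfy F_{ni+i} = L_i^{n−1} · F_{2i} − (−1)^i · Σ_{j=1}^{n−1} L_i^{n−1−j} · F_{ij}, where L denotes the Lucas numbers. -/

import Mathlib

/-- Fibonacci: F_{ni+i} = L_i^{n−1} · F_{2i} − (−1)^i · Σ_{j=1}^{n−1} L_i^{n−1−j} · F_{ij}. -/
theorem fib_sum (F L : ℕ → ℤ)
    (hF0 : F 0 = 0) (hF1 : F 1 = 1)
    (hF : ∀ n : ℕ, F (n + 2) = F (n + 1) + F n)
    (hL0 : L 0 = 2) (hL1 : L 1 = 1)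
    (hL : ∀ n : ℕ, L (n + 2) = L (n + 1) + L n)
    (n i : ℕ) (hn : 2 ≤ n) (hi : 1 ≤ i) :
    F (n * i + i) = L i ^ (n - 1) * F (2 * i) -
      (-1 : ℤ) ^ i * ∑ j ∈ Finset.Icc 1 (n - 1), L i ^ (n - 1 - j) * F (i * j) := by
  -- auxiliary: L i * F(m+i+1) - L(i+1)*F(m+i) = (-1)^i * (2*F(m+1) - F m)
  have hG : ∀ k m : ℕ, L k * F (m + k + 1) - L (k + 1) * F (m + k) =
      (-1 : ℤ) ^ k * (2 * F (m + 1) - F m) := by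
    intro k
    induction k with
    | zero => intro m; simp only [pow_zero, hL0, hL1, Nat.add_zero, Nat.zero_add]; ring
    | succ k ih =>
      intro m
      have h1 := hL k
      have h2 := hF (m + k)
      have h3 := ih m
      have e1 : m + (k + 1) + 1 = m + k + 2 := by ring
      have e2 : m + (k + 1) = m + k + 1 := by ring
      rw [e1, e2, h2, h1, pow_succ]
      linarith [h3]
  -- key: F(m + 2k) = L k * F(m + k) - (-1)^k * F m
  have hP : ∀ k m : ℕ, F (m + 2 * k) = L k * F (m + k) - (-1 : ℤ) ^ k * F m := by
    intro k
    induction k with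
    | zero => intro m; simp [hL0]; ring
    | succ k ih =>
      intro m
      have h1 := ih (m + 2)
      have h2 := hG k (m + 1)
      have e1 : m + 2 * (k + 1) = m + 2 + 2 * k := by ring
      have e2 : m + 2 + k = m + 1 + k + 1 := by ring
      have e3 : m + (k + 1) = m + 1 + k := by ring
      have h3 := hF m
      have e4 : m + 1 + 1 = m + 2 := rfl
      rw [e4] at h2
      rw [e1, h1, e2, e3]
      linear_combination h2 + (-1 : ℤ) ^ k * h3
  -- main statement with n = s + 2
  have main : ∀ s : ℕ, F ((s + 2) * i + i) = L i ^ (s + 1) * F (2 * i) -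
      (-1 : ℤ) ^ i * ∑ j ∈ Finset.Icc 1 (s + 1), L i ^ (s + 1 - j) * F (i * j) := by
    intro s
    induction s with
    | zero =>
      have h := hP i i
      have e1 : (0 + 2) * i + i = i + 2 * i := by ring
      have e2 : i + i = 2 * i := by ring
      rw [e1, h, e2]
      simp [Nat.mul_comm]
    | succ s ih =>
      have h := hP i ((s + 2) * i)
      have e1 : (s + 1 + 2) * i + i = (s + 2) * i + 2 * i := by ring
      have e2 : (s + 2) * i + i = (s + 2) * i + i := rfl
      rw [e1, h]
      rw [ih]
      rw [Finset.sum_Icc_succ_top (by omega : 1 ≤ s + 2)]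
      have hsum : ∑ j ∈ Finset.Icc 1 (s + 1), L i ^ (s + 2 - j) * F (i * j) =
          L i * ∑ j ∈ Finset.Icc 1 (s + 1), L i ^ (s + 1 - j) * F (i * j) := by
        rw [Finset.mul_sum]
        refine Finset.sum_congr rfl ?_
        intro j hj
        rw [Finset.mem_Icc] at hj
        have : s + 2 - j = (s + 1 - j) + 1 := by omega
        rw [this, pow_succ]
        ring
      rw [hsum]
      have e3 : (s + 2) * i = i * (s + 2) := by ring
      rw [e3, pow_succ]
      simp
      ring
  obtain ⟨s, rfl⟩ : ∃ s, n = s + 2 := ⟨n - 2, by omega⟩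
  have : s + 2 - 1 = s + 1 := by omega
  rw [this]
  exact main s
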